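/- Let σ : [0,ℓ] → ℝ², written in polar coordinates σ(t) = (−ρ(t)cos θ(t), ρ(t)sin θ(t)), be an arc-length parametrized C¹ curve with σ(0) = (−r,0), σ(ℓ) = (r,0), θ(0) = 0, θ(ℓ) = π, and suppose ρ(t) ≥ r whenever sin θ(t) > 0 (the curve stays outside the open upper half-disk of radius r centered at the origin). Then ℓ ≥ π r. -/

import Mathlib

open Real Set

/-- Chord bound: two points at radius `≥ r` and angles `α ≤ β` (with `β - α ≤ π`)
are at distance at least `2 r sin((β-α)/2)`. -/
private lemma chord_bound {r R₁ R₂ α β : ℝ} (hr : 0 ≤ r) (h₁ : r ≤ R₁) (h₂ : r ≤ R₂)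
    (hd0 : 0 ≤ β - α) (hdπ : β - α ≤ π) :
    2 * r * Real.sin ((β - α) / 2) ≤
      Real.sqrt ((-(R₂ * Real.cos β) - -(R₁ * Real.cos α)) ^ 2
        + (R₂ * Real.sin β - R₁ * Real.sin α) ^ 2) := by
  have hπ := Real.pi_pos
  have hs : 0 ≤ Real.sin ((β - α) / 2) :=
    Real.sin_nonneg_of_nonneg_of_le_pi (by linarith) (by linarith)
  have hXnn : (0:ℝ) ≤ (-(R₂ * Real.cos β) - -(R₁ * Real.cos α)) ^ 2
      + (R₂ * Real.sin β - R₁ * Real.sin α) ^ 2 := by positivity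
  rw [Real.le_sqrt (by positivity) hXnn]
  have hβ : β = (β - α) + α := by ring
  rw [hβ, Real.cos_add, Real.sin_add]
  set d := β - α with hd
  have hdd : d + α - α = d := by ring
  rw [hdd]
  have h2 : 2 * (d / 2) = d := by ring
  have hcs := Real.cos_sq (d / 2)
  rw [h2] at hcs
  have hpy := Real.sin_sq_add_cos_sq (d / 2)
  have hsq : Real.sin (d / 2) ^ 2 = (1 - Real.cos d) / 2 := by linarith
  have hc1 : Real.cos d ≤ 1 := Real.cos_le_one d
  have pa := Real.sin_sq_add_cos_sq α
  have pd := Real.sin_sq_add_cos_sq d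
  have hrr : r * r ≤ R₁ * R₂ := mul_le_mul h₁ h₂ hr (le_trans hr h₁)
  have hexp : (-(R₂ * (Real.cos d * Real.cos α - Real.sin d * Real.sin α))
        - -(R₁ * Real.cos α)) ^ 2
      + (R₂ * (Real.sin d * Real.cos α + Real.cos d * Real.sin α) - R₁ * Real.sin α) ^ 2
      = R₁ ^ 2 + R₂ ^ 2 - 2 * R₁ * R₂ * Real.cos d := by
    linear_combination
      (R₂ ^ 2 * (Real.sin d ^ 2 + Real.cos d ^ 2) + R₁ ^ 2 - 2 * R₁ * R₂ * Real.cos d) * pa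
        + R₂ ^ 2 * pd
  rw [hexp]
  nlinarith [sq_nonneg (R₁ - R₂),
    mul_nonneg (sub_nonneg.mpr hc1) (sub_nonneg.mpr hrr)]

private lemma euclid_norm_two (x : EuclideanSpace ℝ (Fin 2)) :
    ‖x‖ = Real.sqrt (x 0 ^ 2 + x 1 ^ 2) := by
  rw [EuclideanSpace.norm_eq, Fin.sum_univ_two]
  simp [Real.norm_eq_abs, sq_abs]

/-- **Length of an end.** A unit-speed `C¹` curve `σ(t) = (−ρ(t)cos θ(t), ρ(t)sin θ(t))`
from `(−r,0)` to `(r,0)` with `θ(0) = 0`, `θ(ℓ) = π`, staying outside the open upper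
half-disk of radius `r` centered at the origin (`ρ ≥ r` whenever `sin θ > 0`), has length
`ℓ ≥ π r`. -/
theorem end_length (r ℓ : ℝ) (hr : 0 < r) (hl : 0 ≤ ℓ)
    (σ v : ℝ → EuclideanSpace ℝ (Fin 2)) (ρ θ : ℝ → ℝ)
    (hderiv : ∀ t ∈ Set.Icc 0 ℓ, HasDerivAt σ (v t) t)
    (hunit : ∀ t ∈ Set.Icc 0 ℓ, ‖v t‖ = 1)
    (hcont : ContinuousOn v (Set.Icc 0 ℓ))
    (hθcont : ContinuousOn θ (Set.Icc 0 ℓ))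
    (hpolar : ∀ t ∈ Set.Icc 0 ℓ,
      σ t 0 = -(ρ t * Real.cos (θ t)) ∧ σ t 1 = ρ t * Real.sin (θ t))
    (hstart : σ 0 0 = -r ∧ σ 0 1 = 0) (hend : σ ℓ 0 = r ∧ σ ℓ 1 = 0)
    (hθ0 : θ 0 = 0) (hθl : θ ℓ = Real.pi)
    (hρ : ∀ t ∈ Set.Icc 0 ℓ, 0 < Real.sin (θ t) → r ≤ ρ t) :
    Real.pi * r ≤ ℓ := by
  have hπ := Real.pi_pos
  -- σ is 1-Lipschitz on [0, ℓ]
  have lip : ∀ s ∈ Icc (0:ℝ) ℓ, ∀ t ∈ Icc (0:ℝ) ℓ, s ≤ t → ‖σ t - σ s‖ ≤ t - s := by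
    intro s hs t ht hst
    have h := Convex.norm_image_sub_le_of_norm_hasDerivWithin_le
      (f := σ) (f' := v) (C := 1) (s := Icc (0:ℝ) ℓ)
      (fun x hx => (hderiv x hx).hasDerivWithinAt)
      (fun x hx => le_of_eq (hunit x hx)) (convex_Icc 0 ℓ) hs ht
    rw [one_mul, Real.norm_eq_abs, abs_of_nonneg (by linarith)] at h
    exact h
  -- the key bound for every n ≥ 2
  have key : ∀ n : ℕ, 2 ≤ n → (n : ℝ) * (2 * r * Real.sin (π / (2 * n))) ≤ ℓ := by
    intro n hn
    have hn0 : (0:ℝ) < n := by positivity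
    have h1n : (1:ℝ) ≤ n := by exact_mod_cast (by omega : 1 ≤ n)
    set a : ℕ → ℝ := fun i => i * π / n with ha
    set S : ℕ → Set ℝ := fun i => {x ∈ Icc (0:ℝ) ℓ | a i ≤ θ x} with hSdef
    have haN : ∀ i : ℕ, i ≤ n → a i ≤ π := by
      intro i hi
      rw [ha]
      rw [div_le_iff₀ hn0]
      have : (i:ℝ) ≤ n := by exact_mod_cast hi
      nlinarith
    have ha0 : ∀ i : ℕ, 0 ≤ a i := by
      intro i; rw [ha]; positivity
    have hamono : ∀ i : ℕ, a i ≤ a (i + 1) := by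
      intro i
      rw [ha]
      rw [div_le_div_iff_of_pos_right hn0]
      push_cast
      nlinarith
    have hSne : ∀ i : ℕ, i ≤ n → ℓ ∈ S i := by
      intro i hi
      exact ⟨⟨hl, le_refl ℓ⟩, by rw [hθl]; exact haN i hi⟩
    have hSbdd : ∀ i, BddBelow (S i) := fun i => ⟨0, fun x hx => hx.1.1⟩
    have hSclosed : ∀ i, IsClosed (S i) := by
      intro i
      have hset : S i = Icc (0:ℝ) ℓ ∩ θ ⁻¹' (Ici (a i)) := by
        ext x
        simp [hSdef, Set.mem_preimage, Set.mem_Ici]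
      rw [hset]
      exact hθcont.preimage_isClosed_of_isClosed isClosed_Icc isClosed_Ici
    have hmem : ∀ i : ℕ, i ≤ n → sInf (S i) ∈ S i := by
      intro i hi
      exact (hSclosed i).csInf_mem ⟨ℓ, hSne i hi⟩ (hSbdd i)
    have hθval : ∀ i : ℕ, i ≤ n → θ (sInf (S i)) = a i := by
      intro i hi
      obtain ⟨⟨h0t, htl⟩, hat⟩ := hmem i hi
      have hcont' : ContinuousOn θ (Icc 0 (sInf (S i))) :=
        hθcont.mono (Icc_subset_Icc le_rfl htl)
      have hivt := intermediate_value_Icc h0t hcont'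
      obtain ⟨x, hx, hθx⟩ := hivt ⟨by rw [hθ0]; exact ha0 i, hat⟩
      have hxS : x ∈ S i := ⟨⟨hx.1, le_trans hx.2 htl⟩, le_of_eq hθx.symm⟩
      have hle : sInf (S i) ≤ x := csInf_le (hSbdd i) hxS
      have hxeq : x = sInf (S i) := le_antisymm hx.2 hle
      rw [← hxeq, hθx]
    -- the partition points
    set s : ℕ → ℝ := fun i => if i < n then sInf (S i) else ℓ with hsdef
    have hs0 : s 0 = 0 := by
      have h0n : 0 < n := by omega
      have h0S : (0:ℝ) ∈ S 0 := ⟨⟨le_refl 0, hl⟩, by rw [hθ0, ha]; simp⟩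
      have h1 : sInf (S 0) ≤ 0 := csInf_le (hSbdd 0) h0S
      have h2 : (0:ℝ) ≤ sInf (S 0) := (hmem 0 (by omega)).1.1
      simp only [hsdef, if_pos h0n]
      linarith
    have hsn : s n = ℓ := by simp [hsdef]
    have smem : ∀ i : ℕ, i ≤ n → s i ∈ Icc (0:ℝ) ℓ := by
      intro i hi
      by_cases h : i < n
      · simp only [hsdef, if_pos h]; exact (hmem i hi).1
      · simp only [hsdef, if_neg h]; exact ⟨hl, le_refl ℓ⟩
    have smono : ∀ i : ℕ, i + 1 ≤ n → s i ≤ s (i + 1) := by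
      intro i hi
      by_cases h : i + 1 < n
      · simp only [hsdef, if_pos h, if_pos (by omega : i < n)]
        apply csInf_le_csInf (hSbdd i) ⟨ℓ, hSne (i+1) hi⟩
        intro x hx
        exact ⟨hx.1, le_trans (hamono i) hx.2⟩
      · have hin : i + 1 = n := by omega
        simp only [hsdef, if_pos (by omega : i < n), if_neg h]
        exact ((hmem i (by omega)).1).2
    -- polar representation at each partition point
    have srep : ∀ i : ℕ, i ≤ n → ∃ R : ℝ, r ≤ R ∧
        σ (s i) 0 = -(R * Real.cos (a i)) ∧ σ (s i) 1 = R * Real.sin (a i) := by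
      intro i hi
      rcases Nat.eq_zero_or_pos i with h0 | hipos
      · subst h0
        refine ⟨r, le_refl r, ?_, ?_⟩
        · rw [hs0]; simp only [ha]; simp [hstart.1]
        · rw [hs0]; simp only [ha]; simp [hstart.2]
      rcases eq_or_lt_of_le hi with hin | hilt
      · subst hin
        have hnne : (i:ℝ) ≠ 0 := ne_of_gt hn0
        have han : a i = π := by rw [ha]; field_simp
        refine ⟨r, le_refl r, ?_, ?_⟩
        · rw [hsn, han]; simp [hend.1]
        · rw [hsn, han]; simp [hend.2]
      · -- 0 < i < n
        have hsi : s i = sInf (S i) := by simp [hsdef, hilt]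
        have hmemi := smem i hi
        have hθi : θ (s i) = a i := by rw [hsi]; exact hθval i hi
        have hapos : 0 < a i := by
          rw [ha]
          have : (1:ℝ) ≤ i := by exact_mod_cast hipos
          positivity
        have haπ : a i < π := by
          rw [ha, div_lt_iff₀ hn0]
          have : (i:ℝ) < n := by exact_mod_cast hilt
          nlinarith
        have hsinpos : 0 < Real.sin (a i) := Real.sin_pos_of_pos_of_lt_pi hapos haπ
        have hRr : r ≤ ρ (s i) := hρ (s i) hmemi (by rw [hθi]; exact hsinpos)
        obtain ⟨hp0, hp1⟩ := hpolar (s i) hmemi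
        exact ⟨ρ (s i), hRr, by rw [hp0, hθi], by rw [hp1, hθi]⟩
    -- each step has length at least 2 r sin(π/(2n))
    have step : ∀ i ∈ Finset.range n, 2 * r * Real.sin (π / (2 * n)) ≤ s (i + 1) - s i := by
      intro i hi
      rw [Finset.mem_range] at hi
      obtain ⟨R₁, hR₁, hx₁, hy₁⟩ := srep i (le_of_lt hi)
      obtain ⟨R₂, hR₂, hx₂, hy₂⟩ := srep (i + 1) hi
      have hda : a (i + 1) - a i = π / n := by
        rw [ha]; push_cast; ring
      have hchord := chord_bound (r := r) (R₁ := R₁) (R₂ := R₂) (α := a i) (β := a (i+1))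
        (le_of_lt hr) hR₁ hR₂ (by rw [hda]; positivity)
        (by rw [hda, div_le_iff₀ hn0]
            nlinarith [mul_nonneg hπ.le (sub_nonneg.mpr h1n)])
      have hd2 : (a (i + 1) - a i) / 2 = π / (2 * n) := by rw [hda]; ring
      rw [hd2] at hchord
      have hnorm : ‖σ (s (i+1)) - σ (s i)‖ =
          Real.sqrt ((-(R₂ * Real.cos (a (i+1))) - -(R₁ * Real.cos (a i))) ^ 2
            + (R₂ * Real.sin (a (i+1)) - R₁ * Real.sin (a i)) ^ 2) := by
        rw [euclid_norm_two]
        congr 2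
        · simp only [PiLp.sub_apply]
          rw [hx₂, hx₁]
        · simp only [PiLp.sub_apply]
          rw [hy₂, hy₁]
      have hlip := lip (s i) (smem i (le_of_lt hi)) (s (i+1)) (smem (i+1) hi)
        (smono i hi)
      rw [hnorm] at hlip
      linarith
    have hsum : ∑ i ∈ Finset.range n, (s (i + 1) - s i) = ℓ := by
      rw [Finset.sum_range_sub, hsn, hs0, sub_zero]
    calc (n : ℝ) * (2 * r * Real.sin (π / (2 * n)))
        = ∑ _i ∈ Finset.range n, 2 * r * Real.sin (π / (2 * n)) := by
          rw [Finset.sum_const, Finset.card_range, nsmul_eq_mul]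
      _ ≤ ∑ i ∈ Finset.range n, (s (i + 1) - s i) := Finset.sum_le_sum step
      _ = ℓ := hsum
  -- conclude by taking n → ∞
  by_contra hcon
  push_neg at hcon
  set ε := π * r - ℓ with hε
  have hεpos : 0 < ε := by linarith
  obtain ⟨n, hn⟩ := exists_nat_gt (max 2 (r * π ^ 3 / (16 * ε)))
  have hn2r : (2:ℝ) ≤ n := le_of_lt (lt_of_le_of_lt (le_max_left _ _) hn)
  have hn2 : 2 ≤ n := by exact_mod_cast hn2r
  have hnR : r * π ^ 3 / (16 * ε) < n := lt_of_le_of_lt (le_max_right _ _) hn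
  have hN0 : (0:ℝ) < n := by linarith
  have hb := key n hn2
  set x := π / (2 * (n:ℝ)) with hx
  have hx0 : 0 < x := by rw [hx]; positivity
  have hx1 : x ≤ 1 := by
    rw [hx, div_le_one (by positivity)]
    linarith [Real.pi_lt_d2, hn2r]
  have hsin : x - x ^ 3 / 4 < Real.sin x := by
    have := Real.sin_gt_sub_cube hx0
    linarith [pow_pos hx0 3]
  have hxN : 2 * (n:ℝ) * x = π := by
    rw [hx]; field_simp
  have hnn : r * π ^ 3 < 16 * ε * n := by
    rw [div_lt_iff₀ (by positivity)] at hnR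
    linarith
  have hN2 : (n:ℝ) ≤ (n:ℝ) ^ 2 := by nlinarith
  have h2Nr : (0:ℝ) < 2 * n * r := by positivity
  have e1 := mul_lt_mul_of_pos_left hsin h2Nr
  have e2 : (2 * (n:ℝ) * r) * Real.sin x ≤ ℓ := by
    have : (2 * (n:ℝ) * r) * Real.sin x = (n:ℝ) * (2 * r * Real.sin x) := by ring
    rw [this]; exact hb
  have e3 : 2 * (n:ℝ) * r * x = π * r := by rw [← hxN]; ring
  have hcube : (2 * (n:ℝ) * x) ^ 3 = π ^ 3 := by rw [hxN]
  have hcube' : 8 * (n:ℝ) ^ 3 * x ^ 3 = π ^ 3 := by linear_combination hcube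
  have hcube_r : 8 * (n:ℝ) ^ 3 * x ^ 3 * r = π ^ 3 * r := by
    rw [hcube']
  have hNN : (0:ℝ) < (n:ℝ) ^ 2 := by positivity
  have h16 : r * π ^ 3 < 16 * ε * (n:ℝ) ^ 2 := by
    linarith [hnn, mul_nonneg hεpos.le (sub_nonneg.mpr hN2)]
  have e4 : (n:ℝ) * r * x ^ 3 / 2 < ε := by
    have h8 : (n:ℝ) * r * x ^ 3 / 2 = r * π ^ 3 / (16 * (n:ℝ) ^ 2) := by
      rw [eq_div_iff (by positivity)]
      linear_combination r * hcube'
    rw [h8, div_lt_iff₀ (by positivity)]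
    linarith [h16]
  -- ℓ ≥ 2nr sin x > 2nr x - 2nr x³/4 = πr - nrx³/2 > πr - ε = ℓ
  linarith [e1, e2, e3, e4, hε]
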